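/- arXiv:2510.10498 — 2 statements merged into one kernel-verified Lean document; each statement's English description precedes it below -/
import Mathlib

section
/- Let b ≥ 1 be an integer and set ω = ⌈(n+2)/(b+1)⌉ for an integer n ≥ b + 2. Then 2e(K_{n−ω} ∨ ωK_1) = (n − ω)(n + ω − 1) < ((b² + 2b)n² − 4n − 4)/(b+1)². -/
open scoped Classical ENNReal

noncomputable def signlessLaplacian {V : Type*} [Fintype V] [DecidableEq V]
    (G : SimpleGraph V) : Matrix V V ℝ :=
  Matrix.of fun u v =>
    (if u = v then ((G.neighborSet u).ncard : ℝ) else 0) + (if G.Adj u v then 1 else 0)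

/-- The `Q`-index: the largest eigenvalue of the signless Laplacian `D(G) + A(G)`. -/
noncomputable def qIndex {V : Type*} [Fintype V] [DecidableEq V]
    (G : SimpleGraph V) : ℝ :=
  sSup (spectrum ℝ (signlessLaplacian G))

/-- `K_s ∨ (K_{ns 0} ∪ K_{ns 1} ∪ ⋯)` : the join of a clique of size `s` with a
disjoint union of cliques of sizes `ns i`. -/
def joinCliques (s : ℕ) {t : ℕ} (ns : Fin t → ℕ) :
    SimpleGraph (Fin s ⊕ (Σ i : Fin t, Fin (ns i))) where
  Adj u v := u ≠ v ∧ ((∃ a, u = Sum.inl a) ∨ (∃ a, v = Sum.inl a) ∨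
      ∃ (i : Fin t) (x y : Fin (ns i)), u = Sum.inr ⟨i, x⟩ ∧ v = Sum.inr ⟨i, y⟩)
  symm := ⟨by
    rintro u v ⟨hne, h⟩
    refine ⟨hne.symm, ?_⟩
    rcases h with ⟨a, ha⟩ | ⟨a, ha⟩ | ⟨i, x, y, hx, hy⟩
    · exact Or.inr (Or.inl ⟨a, ha⟩)
    · exact Or.inl ⟨a, ha⟩
    · exact Or.inr (Or.inr ⟨i, y, x, hy, hx⟩)⟩
  loopless := ⟨fun u h => h.1 rfl⟩

/-- `c(G - S)`: number of connected components after deleting the vertex set `S`. -/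
noncomputable def numComp {V : Type*} (G : SimpleGraph V) (S : Set V) : ℕ :=
  Nat.card (G.induce Sᶜ).ConnectedComponent

/-- The `l`-toughness `t_l(G) = min { |S| / c(G-S) : S ⊂ V(G), c(G-S) ≥ l }`,
with value `+∞` (the empty infimum in `ℝ≥0∞`) if no such `S` exists. -/
noncomputable def lToughness {V : Type*} [Fintype V] (G : SimpleGraph V) (l : ℕ) : ℝ≥0∞ :=
  ⨅ (S : Finset V) (_ : l ≤ numComp G (S : Set V)),
    (S.card : ℝ≥0∞) / (numComp G (S : Set V) : ℝ≥0∞)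


lemma twoE (s t : ℕ) :
    2 * (joinCliques s (fun _ : Fin t => 1)).edgeSet.ncard = s * (s + t - 1) + t * s := by
  classical
  set G := joinCliques s (fun _ : Fin t => 1) with hG
  have hncard : G.edgeSet.ncard = G.edgeFinset.card := by
    rw [Set.ncard_eq_toFinset_card']
    congr 1
  have hsum := G.sum_degrees_eq_twice_card_edges
  have hcardV : Fintype.card (Fin s ⊕ (Σ i : Fin t, Fin 1)) = s + t := by
    simp
  have hdegl : ∀ a : Fin s, G.degree (Sum.inl a) = s + t - 1 := by
    intro a
    have : G.neighborFinset (Sum.inl a) = Finset.univ.erase (Sum.inl a) := by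
      ext v
      simp only [SimpleGraph.mem_neighborFinset, hG, joinCliques, Finset.mem_erase,
        Finset.mem_univ, and_true]
      constructor
      · rintro ⟨hne, -⟩; exact hne.symm
      · intro h; exact ⟨h.symm, Or.inl ⟨a, rfl⟩⟩
    rw [SimpleGraph.degree, this, Finset.card_erase_of_mem (Finset.mem_univ _),
      Finset.card_univ, hcardV]
  have hdegr : ∀ p : Σ i : Fin t, Fin 1, G.degree (Sum.inr p) = s := by
    intro ⟨i, x⟩
    have : G.neighborFinset (Sum.inr ⟨i, x⟩)
        = Finset.univ.map ⟨Sum.inl, Sum.inl_injective⟩ := by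
      ext v
      simp only [SimpleGraph.mem_neighborFinset, hG, joinCliques, Finset.mem_map,
        Finset.mem_univ, Function.Embedding.coeFn_mk, true_and]
      constructor
      · rintro ⟨hne, h | ⟨a, ha⟩ | ⟨j, y, z, hy, hz⟩⟩
        · obtain ⟨a, ha⟩ := h; exact absurd ha (by simp)
        · exact ⟨a, ha.symm⟩
        · exfalso
          cases Sum.inr_injective hy
          exact hne (by rw [hz, Subsingleton.elim z x])
      · rintro ⟨a, rfl⟩
        exact ⟨by simp, Or.inr (Or.inl ⟨a, rfl⟩)⟩
    rw [SimpleGraph.degree, this, Finset.card_map, Finset.card_univ, Fintype.card_fin]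
  rw [hncard, ← hsum, Fintype.sum_sum_type]
  simp [hdegl, hdegr, Finset.sum_const, mul_comm]

/-- For `b ≥ 1`, `n ≥ b + 2` and `ω = ⌈(n+2)/(b+1)⌉ = (n + b + 2)/(b + 1)`:
`2e(K_{n−ω} ∨ ωK₁) = (n − ω)(n + ω − 1) < ((b² + 2b)n² − 4n − 4)/(b+1)²`. -/
theorem statement11 (b n : ℕ) (hb : 1 ≤ b) (hn : b + 2 ≤ n) :
    2 * (joinCliques (n - (n + b + 2) / (b + 1))
          (fun _ : Fin ((n + b + 2) / (b + 1)) => 1)).edgeSet.ncard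
        = (n - (n + b + 2) / (b + 1)) * (n + (n + b + 2) / (b + 1) - 1) ∧
      (((n - (n + b + 2) / (b + 1)) * (n + (n + b + 2) / (b + 1) - 1) : ℕ) : ℝ)
        < (((b : ℝ) ^ 2 + 2 * b) * (n : ℝ) ^ 2 - 4 * n - 4) / ((b : ℝ) + 1) ^ 2 := by
  set w := (n + b + 2) / (b + 1) with hw
  clear_value w
  -- basic nat facts about w
  have hdm := Nat.div_add_mod (n + b + 2) (b + 1)
  rw [← hw] at hdm
  have hmlt : (n + b + 2) % (b + 1) < b + 1 := Nat.mod_lt _ (by omega)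
  have h1 : (b + 1) * w ≤ n + b + 2 := by omega
  have h2 : n + 2 ≤ (b + 1) * w := by omega
  have h3 : w ≤ n := by
    by_contra h
    push_neg at h
    have : (b + 1) * (n + 1) ≤ (b + 1) * w := Nat.mul_le_mul_left _ h
    nlinarith
  have h4 : w < n ∨ n + 3 ≤ (b + 1) * w := by
    by_contra h
    push_neg at h
    obtain ⟨h4a, h4b⟩ := h
    have hwn : w = n := le_antisymm h3 h4a
    rw [hwn] at h4b
    nlinarith
  constructor
  · rw [twoE]
    have hs : n - w + w = n := by omega
    have e1 : n - w + w - 1 = n - 1 := by omega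
    have e2 : n + w - 1 = (n - 1) + w := by omega
    rw [e1, e2, Nat.mul_add, Nat.mul_comm w (n - w)]
  · have hb' : (1 : ℝ) ≤ b := by exact_mod_cast hb
    have hn' : (b : ℝ) + 2 ≤ n := by exact_mod_cast hn
    have hw3 : (w : ℝ) ≤ n := by exact_mod_cast h3
    have hw2 : (n : ℝ) + 2 ≤ ((b : ℝ) + 1) * w := by exact_mod_cast h2
    have hcast : ((n - w : ℕ) : ℝ) = (n : ℝ) - w := by
      rw [Nat.cast_sub h3]
    have hcast2 : ((n + w - 1 : ℕ) : ℝ) = (n : ℝ) + w - 1 := by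
      have : 1 ≤ n + w := by omega
      push_cast [Nat.cast_sub this]
      ring
    rw [Nat.cast_mul, hcast, hcast2, lt_div_iff₀ (by positivity : (0:ℝ) < ((b:ℝ)+1)^2)]
    rcases h4 with h | h
    · have hlt : (w : ℝ) + 1 ≤ n := by exact_mod_cast h
      nlinarith [mul_le_mul hw2 hw2 (by positivity) (by positivity),
        sq_nonneg ((b:ℝ) + 1), sq_nonneg ((b:ℝ) - 1), hb', hlt]
    · have h' : (n : ℝ) + 3 ≤ ((b:ℝ) + 1) * w := by exact_mod_cast h
      nlinarith [mul_le_mul h' h' (by positivity) (by positivity),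
        mul_nonneg (sub_nonneg.2 hw3) (sq_nonneg ((b:ℝ) + 1)), hn', hb']
end

section
/- Let b ≥ 2 and l ≥ 2 be integers, set g = ⌈(l−1)/b⌉, and let n and s be integers with n ≥ 6bg and g + 1 ≤ s ≤ (n−1)/(b+1). Then for every real x ≥ 2n − 2bg − 2, the quadratic φ(x) = (2b−1)x² − (2bn − 3n + 4bs + 4bg − 4b + 4)x − 2n² + 4bsn + 4bgn + 6n − 2b²s² − 2b²sg − 2b²g² − 6bs − 6bg − 4 satisfies φ(x) > 0. -/
open scoped Classical ENNReal

set_option maxHeartbeats 1000000 in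
/-- For `b ≥ 2`, `l ≥ 2`, `g = ⌈(l−1)/b⌉ = (l + b − 2)/b`, `n ≥ 6bg` and
`g + 1 ≤ s ≤ (n−1)/(b+1)`: for every real `x ≥ 2n − 2bg − 2`, the quadratic
`φ(x) = (2b−1)x² − (2bn − 3n + 4bs + 4bg − 4b + 4)x − 2n² + 4bsn + 4bgn + 6n
− 2b²s² − 2b²sg − 2b²g² − 6bs − 6bg − 4` is positive. -/
theorem statement14 (b l n s g : ℕ) (hb : 2 ≤ b) (hl : 2 ≤ l)
    (hg : g = (l + b - 2) / b)
    (hn : 6 * b * g ≤ n) (hs1 : g + 1 ≤ s) (hs2 : (b + 1) * s ≤ n - 1) :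
    ∀ x : ℝ, 2 * (n : ℝ) - 2 * b * g - 2 ≤ x →
      0 < (2 * (b : ℝ) - 1) * x ^ 2
          - (2 * (b : ℝ) * n - 3 * n + 4 * b * s + 4 * b * g - 4 * b + 4) * x
          - 2 * (n : ℝ) ^ 2 + 4 * b * s * n + 4 * b * g * n + 6 * n
          - 2 * (b : ℝ) ^ 2 * s ^ 2 - 2 * (b : ℝ) ^ 2 * s * g - 2 * (b : ℝ) ^ 2 * g ^ 2
          - 6 * b * s - 6 * b * g - 4 := by
  intro x hx
  have hg1 : 1 ≤ g := hg ▸ (Nat.one_le_div_iff (by omega)).mpr (by omega)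
  have hn1 : (b + 1) * s + 1 ≤ n := by
    have h12 : 6 * 2 * 1 ≤ 6 * b * g := Nat.mul_le_mul (Nat.mul_le_mul_left 6 hb) hg1
    omega
  have HB : (2 : ℝ) ≤ b := by exact_mod_cast hb
  have HG : (1 : ℝ) ≤ g := by exact_mod_cast hg1
  have HN : 6 * (b : ℝ) * g ≤ n := by exact_mod_cast hn
  have HS1 : (g : ℝ) + 1 ≤ s := by exact_mod_cast hs1
  have HS2 : ((b : ℝ) + 1) * s + 1 ≤ n := by exact_mod_cast hn1
  set B := (b : ℝ); set G := (g : ℝ); set N := (n : ℝ); set S := (s : ℝ)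
  clear hg hn hs1 hs2 hb hl hn1 hg1
  clear_value B G N S
  have hB0 : (0:ℝ) ≤ B := by linarith
  have hG0 : (0:ℝ) ≤ G := by linarith
  have hS2 : (2:ℝ) ≤ S := by linarith
  have hS0 : (0:ℝ) ≤ S := by linarith
  have hN0 : (0:ℝ) ≤ N := by nlinarith
  have hu : (0:ℝ) ≤ N - 6*B*G := by linarith
  have hv : (0:ℝ) ≤ N - (B+1)*S - 1 := by linarith
  have hw : (0:ℝ) ≤ S - G - 1 := by linarith
  have hb2 : (0:ℝ) ≤ B - 2 := by linarith
  have h2BSG : (0:ℝ) ≤ 2*B*S - G := by nlinarith [mul_nonneg hb2 hS0]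
  have hy : 0 ≤ x - (2 * N - 2 * B * G - 2) := by linarith
  have hq : 0 < 2*N^2 - 2*N - 2*N*S - G*N - 6*B*G*N + S + G - B*S^2 + 4*B*G
      + 3*B*G*S + B*G^2 + 4*B^2*G^2 := by
    nlinarith [mul_nonneg hu hN0, mul_nonneg hv hv, mul_nonneg hv h2BSG,
      mul_nonneg (mul_nonneg hb2 hB0) (mul_nonneg hS0 hS0),
      mul_nonneg hb2 (mul_nonneg hS0 hS0),
      mul_nonneg hS0 (by linarith : (0:ℝ) ≤ S - 2),
      mul_nonneg hG0 hS0, mul_nonneg hB0 (mul_nonneg hG0 hS0),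
      mul_nonneg hB0 hG0, mul_nonneg (mul_nonneg hB0 hG0) hG0,
      sq_nonneg (B*G), mul_nonneg hv hS0, mul_nonneg hb2 (mul_nonneg hG0 hS0)]
  have hphi0 : 0 < 4*B*N^2 - 4*B*N - 4*B*N*S - 2*B*G*N - 12*B^2*G*N + 2*B*S + 2*B*G
      - 2*B^2*S^2 + 8*B^2*G + 6*B^2*G*S + 2*B^2*G^2 + 8*B^3*G^2 := by
    have : 0 < 2*B := by linarith
    nlinarith [mul_pos this hq]
  have hD : 0 ≤ (6*B - 1)*N - 4*B*S - 8*B^2*G - 4*B := by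
    nlinarith [mul_nonneg hB0 hu, mul_nonneg hB0 (by linarith : (0:ℝ) ≤ G - 1),
      mul_nonneg hb2 hS0]
  nlinarith [hphi0, mul_nonneg hy hD,
    mul_nonneg (by linarith : (0:ℝ) ≤ 2*B - 1) (sq_nonneg (x - (2 * N - 2 * B * G - 2)))]
end
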